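/- Let N, M ≥ 1, let λ : Z_{NM} → Z_M be reduction mod M and ι : Z_N → Z_{NM} be multiplication by M, forming the exact sequence 0 → Z_N → Z_{NM} → Z_M → 0. For k ∈ {0,…,N−1}, the 2-cocycle ω_k on Z_N × Z_N given by ω_k((a₁,b₁),(a₂,b₂)) = exp(2πi k a₁b₂/N) is cohomologous to the pullback along ι × ι of some 2-cocycle on Z_{NM} × Z_{NM} if and only if there exists k' ∈ Z with k'·M ≡ k (mod N). -/

import Mathlib

open Real

/-- The antisymmetrized pairing of a 2-cocycle is additive in the first argument. -/
lemma cocycle_pairing {G : Type*} [AddCommGroup G] (ω : G → G → Circle)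
    (hc : ∀ g₁ g₂ g₃, ω g₂ g₃ * ω g₁ (g₂ + g₃) = ω (g₁ + g₂) g₃ * ω g₁ g₂)
    (g g' h : G) :
    ω (g + g') h * (ω h (g + g'))⁻¹
      = (ω g h * (ω h g)⁻¹) * (ω g' h * (ω h g')⁻¹) := by
  have e1 := hc g g' h
  have e2 := hc g h g'
  have e3 := hc h g g'
  rw [add_comm h g'] at e2
  rw [add_comm h g] at e3
  -- move to ℂ
  apply Circle.ext
  have e1' := congrArg (Circle.coeHom) e1
  have e2' := congrArg (Circle.coeHom) e2
  have e3' := congrArg (Circle.coeHom) e3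
  simp only [map_mul, Circle.coeHom_apply] at e1' e2' e3'
  simp only [Circle.coeHom, MonoidHom.coe_mk] at e1' e2' e3'
  simp only [Circle.coe_mul, Circle.coe_inv]
  set p := (ω (g + g') h : ℂ)
  set q := (ω h (g + g') : ℂ)
  set a := (ω g h : ℂ)
  set b := (ω h g : ℂ)
  set c := (ω g' h : ℂ)
  set d := (ω h g' : ℂ)
  set r := (ω g g' : ℂ)
  set s := (ω g (g' + h) : ℂ)
  set t := (ω (g + h) g' : ℂ)
  have hb : b ≠ 0 := Circle.coe_ne_zero _
  have hd : d ≠ 0 := Circle.coe_ne_zero _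
  have hq : q ≠ 0 := Circle.coe_ne_zero _
  have ha : a ≠ 0 := Circle.coe_ne_zero _
  have hr : r ≠ 0 := Circle.coe_ne_zero _
  have key : p * b * d = a * c * q := by
    have hra : r * a ≠ 0 := mul_ne_zero hr ha
    apply mul_right_cancel₀ hra
    linear_combination (-(b*d*a)) * e1' + (c*b*a) * e2' - (a*a*c) * e3'
  field_simp
  linear_combination key

lemma pairing_zero {G : Type*} [AddCommGroup G] (ω : G → G → Circle)
    (hc : ∀ g₁ g₂ g₃, ω g₂ g₃ * ω g₁ (g₂ + g₃) = ω (g₁ + g₂) g₃ * ω g₁ g₂)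
    (h : G) : ω 0 h * (ω h 0)⁻¹ = 1 := by
  have := cocycle_pairing ω hc 0 0 h
  rw [add_zero] at this
  nth_rewrite 1 [← mul_one (ω 0 h * (ω h 0)⁻¹)] at this
  exact (mul_left_cancel this).symm

lemma pairing_nsmul {G : Type*} [AddCommGroup G] (ω : G → G → Circle)
    (hc : ∀ g₁ g₂ g₃, ω g₂ g₃ * ω g₁ (g₂ + g₃) = ω (g₁ + g₂) g₃ * ω g₁ g₂)
    (g h : G) (n : ℕ) :
    ω (n • g) h * (ω h (n • g))⁻¹ = (ω g h * (ω h g)⁻¹) ^ n := by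
  induction n with
  | zero => simpa using pairing_zero ω hc h
  | succ n ih =>
      rw [succ_nsmul, cocycle_pairing ω hc _ _ _, ih, pow_succ]

lemma pairing_swap {G : Type*} [AddCommGroup G] (ω : G → G → Circle) (g h : G) :
    ω g h * (ω h g)⁻¹ = (ω h g * (ω g h)⁻¹)⁻¹ := by
  rw [mul_inv_rev, inv_inv, mul_comm]

lemma pairing_nsmul' {G : Type*} [AddCommGroup G] (ω : G → G → Circle)
    (hc : ∀ g₁ g₂ g₃, ω g₂ g₃ * ω g₁ (g₂ + g₃) = ω (g₁ + g₂) g₃ * ω g₁ g₂)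
    (g h : G) (n : ℕ) :
    ω g (n • h) * (ω (n • h) g)⁻¹ = (ω g h * (ω h g)⁻¹) ^ n := by
  rw [pairing_swap, pairing_nsmul ω hc h g n, ← inv_pow, ← pairing_swap]

lemma circle_exp_pow (θ : ℝ) (n : ℕ) : (Circle.exp θ) ^ n = Circle.exp (n * θ) := by
  induction n with
  | zero => simp
  | succ n ih => rw [pow_succ, ih, ← Circle.exp_add]; push_cast; ring_nf

/-- The inclusion `ℤ_N × ℤ_N → ℤ_{NM} × ℤ_{NM}`, multiplication by `M`
componentwise. -/
def inclNM (N M : ℕ) (g : ZMod N × ZMod N) : ZMod (N * M) × ZMod (N * M) :=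
  (((M * g.1.val : ℕ) : ZMod (N * M)), ((M * g.2.val : ℕ) : ZMod (N * M)))

/-- For the extension `0 → ℤ_N →(·M) ℤ_{NM} →(mod M) ℤ_M → 0`
and `k ∈ {0,…,N−1}`, the 2-cocycle `ω_k((a₁,b₁),(a₂,b₂)) = exp(2πi k a₁b₂/N)`
on `ℤ_N × ℤ_N` is cohomologous to the pullback along `ι × ι` of some 2-cocycle
on `ℤ_{NM} × ℤ_{NM}` if and only if there exists `k' ∈ ℤ` with
`k'·M ≡ k (mod N)`. -/
theorem statement4 (N M : ℕ) (hN : 1 ≤ N) (hM : 1 ≤ M) (k : ℕ) (hk : k < N) :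
    (∃ ω' : ZMod (N * M) × ZMod (N * M) → ZMod (N * M) × ZMod (N * M) → Circle,
      (∀ g₁ g₂ g₃, ω' g₂ g₃ * ω' g₁ (g₂ + g₃) = ω' (g₁ + g₂) g₃ * ω' g₁ g₂) ∧
      ∃ β : ZMod N × ZMod N → Circle,
        ∀ g₁ g₂ : ZMod N × ZMod N,
          Circle.exp (2 * Real.pi * (k : ℝ) * ((g₁.1.val : ℝ) * (g₂.2.val : ℝ)) / (N : ℝ))
            = ω' (inclNM N M g₁) (inclNM N M g₂) *
              (β g₂ * (β (g₁ + g₂))⁻¹ * β g₁))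
    ↔ ∃ k' : ℤ, ((k' * M : ℤ) : ZMod N) = ((k : ℕ) : ZMod N) := by
  constructor
  · rintro ⟨ω', hcoc, β, hβ⟩
    rcases eq_or_lt_of_le hN with hN1 | hN2
    · refine ⟨0, ?_⟩
      haveI : Subsingleton (ZMod N) := by rw [← hN1]; infer_instance
      exact Subsingleton.elim _ _
    have hNM : (0:ℕ) < N * M := Nat.mul_pos (by omega) hM
    haveI : NeZero (N * M) := ⟨hNM.ne'⟩
    set e₁ : ZMod (N*M) × ZMod (N*M) := (1, 0) with he₁
    set e₂ : ZMod (N*M) × ZMod (N*M) := (0, 1) with he₂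
    have v1 : ((1 : ZMod N)).val = 1 := by
      rw [ZMod.val_one_eq_one_mod]; exact Nat.mod_eq_of_lt hN2
    have h1 := hβ (1,0) (0,1)
    have h2 := hβ (0,1) (1,0)
    simp only [v1, ZMod.val_zero, Nat.cast_one, Nat.cast_zero, mul_one, one_mul, mul_zero,
      zero_mul, zero_div, Circle.exp_zero] at h1 h2
    rw [add_comm ((0,1) : ZMod N × ZMod N) (1,0)] at h2
    have hcob : β ((1,0) : ZMod N × ZMod N) * (β ((1,0) + (0,1)))⁻¹ * β (0,1)
        = β ((0,1) : ZMod N × ZMod N) * (β ((1,0) + (0,1)))⁻¹ * β (1,0) := by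
      simp [mul_comm, mul_left_comm, mul_assoc]
    rw [hcob] at h2
    set B := β ((0,1) : ZMod N × ZMod N) * (β ((1,0) + (0,1)))⁻¹ * β ((1,0) : ZMod N × ZMod N)
      with hB
    have hinv : ω' (inclNM N M (0,1)) (inclNM N M (1,0)) * B = 1 := h2.symm
    have key : Circle.exp (2 * π * (k:ℝ) / N)
        = ω' (inclNM N M (1,0)) (inclNM N M (0,1)) *
          (ω' (inclNM N M (0,1)) (inclNM N M (1,0)))⁻¹ := by
      rw [h1]
      have : B = (ω' (inclNM N M (0,1)) (inclNM N M (1,0)))⁻¹ :=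
        eq_inv_of_mul_eq_one_right hinv
      rw [this]
    have hX : inclNM N M (1,0) = M • e₁ := by
      simp [inclNM, v1, he₁, Prod.ext_iff, nsmul_eq_mul]
    have hY : inclNM N M (0,1) = M • e₂ := by
      simp [inclNM, v1, he₂, Prod.ext_iff, nsmul_eq_mul]
    rw [hX, hY] at key
    set z := ω' e₁ e₂ * (ω' e₂ e₁)⁻¹ with hz
    have keyz : Circle.exp (2 * π * (k:ℝ) / N) = z ^ (M*M) := by
      rw [key, pairing_nsmul ω' hcoc e₁ (M • e₂) M, pairing_nsmul' ω' hcoc e₁ e₂ M, ← pow_mul]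
    have hzNM : z ^ (N*M) = 1 := by
      rw [hz, ← pairing_nsmul ω' hcoc e₁ e₂ (N*M)]
      have : (N*M) • e₁ = (0 : ZMod (N*M) × ZMod (N*M)) := by
        simp [he₁, Prod.ext_iff, nsmul_eq_mul]
      rw [this]
      exact pairing_zero ω' hcoc e₂
    obtain ⟨θ, hθ⟩ : ∃ θ : ℝ, Circle.exp θ = z := ⟨_, Circle.exp_arg z⟩
    rw [← hθ, circle_exp_pow] at hzNM keyz
    obtain ⟨n, hn⟩ := Circle.exp_eq_one.mp hzNM
    obtain ⟨m, hm⟩ := Circle.exp_eq_exp.mp keyz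
    have hNne : (N:ℝ) ≠ 0 := by positivity
    have hpi : (2 * π) ≠ 0 := by positivity
    rw [div_eq_iff hNne] at hm
    have hr : (2*π) * (k:ℝ) = (2*π) * ((n:ℝ)*M + m*N) := by
      push_cast at hn hm ⊢
      linear_combination (M:ℝ) * hn + hm
    have hkr : (k:ℝ) = (n:ℝ)*M + m*N := mul_left_cancel₀ hpi hr
    have hki : (k:ℤ) = n*M + m*N := by exact_mod_cast hkr
    refine ⟨n, ?_⟩
    have := congrArg (Int.cast : ℤ → ZMod N) hki
    push_cast at this ⊢
    simp [ZMod.natCast_self] at this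
    rw [this]
  · rintro ⟨k', hk'⟩
    haveI : NeZero (N * M) := ⟨(Nat.mul_pos (by omega) hM).ne'⟩
    obtain ⟨t, ht⟩ : ∃ t : ℤ, k' * M - k = N * t := by
      have h0 : ((k' * M - k : ℤ) : ZMod N) = 0 := by
        push_cast
        push_cast at hk'
        rw [hk']
        ring
      exact (ZMod.intCast_zmod_eq_zero_iff_dvd _ N).mp h0
    refine ⟨fun x y => ZMod.toCircle ((k' : ZMod (N*M)) * x.1 * y.2), ?_, fun _ => 1, ?_⟩
    · intro g₁ g₂ g₃
      rw [← AddChar.map_add_eq_mul, ← AddChar.map_add_eq_mul]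
      congr 1
      simp only [Prod.fst_add, Prod.snd_add]
      ring
    · intro g₁ g₂
      simp only [inv_one, mul_one, one_mul]
      have harg : (k' : ZMod (N*M)) * ((M * g₁.1.val : ℕ) : ZMod (N*M)) *
            ((M * g₂.2.val : ℕ) : ZMod (N*M))
          = ((k' * (M*g₁.1.val) * (M*g₂.2.val) : ℤ) : ZMod (N*M)) := by push_cast; ring
      show _ = ZMod.toCircle _
      simp only [inclNM]
      rw [harg]
      apply Circle.ext
      rw [Circle.coe_exp, ZMod.toCircle_intCast]
      rw [Complex.exp_eq_exp_iff_exists_int]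
      refine ⟨-(t * g₁.1.val * g₂.2.val), ?_⟩
      have htC : (k':ℂ) * M - k = N * t := by exact_mod_cast congrArg (Int.cast : ℤ → ℂ) ht
      have hNne : (N:ℂ) ≠ 0 := by exact_mod_cast Nat.cast_ne_zero.mpr (by omega)
      have hMne : (M:ℂ) ≠ 0 := by exact_mod_cast Nat.cast_ne_zero.mpr (by omega)
      push_cast
      field_simp
      ring_nf
      linear_combination (-((g₁.1.val:ℂ)*(g₂.2.val:ℂ))) * htC
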